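/- Let G be a nontrivial strongly connected directed graph. For every pair of nodes i, j of G and every integer n ≥ ep(G) + c(G) + cd(G) − 1, there exists a path π from i to j such that n − ℓ(π) ∈ {0, 1, …, c(G)−1}. -/

import Mathlib

namespace Transients

variable {V : Type*}

/-- A walk of length `n` in the graph with edge relation `E`, given by its node
sequence `p 0, p 1, …, p n`. -/
def IsWalk (E : V → V → Prop) (n : ℕ) (p : ℕ → V) : Prop :=
  ∀ k, k < n → E (p k) (p (k + 1))

/-- A closed walk: start node equals end node. -/
def IsClosedWalk (E : V → V → Prop) (n : ℕ) (p : ℕ → V) : Prop :=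
  IsWalk E n p ∧ p 0 = p n

/-- A nonempty elementary closed walk: closed, and no node repeats except start = end. -/
def IsElemClosedWalk (E : V → V → Prop) (n : ℕ) (p : ℕ → V) : Prop :=
  0 < n ∧ IsClosedWalk E n p ∧ ∀ k l, k < n → l < n → p k = p l → k = l

/-- A simple walk: no node is visited twice. -/
def IsSimpleWalk (E : V → V → Prop) (n : ℕ) (p : ℕ → V) : Prop :=
  IsWalk E n p ∧ ∀ k l, k ≤ n → l ≤ n → p k = p l → k = l

def StronglyConnected (E : V → V → Prop) : Prop :=
  ∀ i j : V, ∃ n p, IsWalk E n p ∧ p 0 = i ∧ p n = j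

def NontrivialGraph (E : V → V → Prop) : Prop := ∃ i j, E i j

/-- The weight `w_*` of a walk in an edge-weighted graph. -/
noncomputable def walkWeight (w : V → V → ℝ) (n : ℕ) (p : ℕ → V) : ℝ :=
  ∑ k ∈ Finset.range n, w (p k) (p (k + 1))

/-- The rate ρ(G): supremum of `w_*(γ)/ℓ(γ)` over nonempty closed walks γ. -/
noncomputable def rate (E : V → V → Prop) (w : V → V → ℝ) : ℝ :=
  sSup {x : ℝ | ∃ n p, 0 < n ∧ IsClosedWalk E n p ∧ x = walkWeight w n p / n}

/-- A critical closed walk: nonempty, closed, and its weight is ρ(G) times its length. -/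
def IsCriticalWalk (E : V → V → Prop) (w : V → V → ℝ) (n : ℕ) (p : ℕ → V) : Prop :=
  0 < n ∧ IsClosedWalk E n p ∧ walkWeight w n p = rate E w * n

/-- A critical node: lies on some critical closed walk. -/
def CriticalNode (E : V → V → Prop) (w : V → V → ℝ) (i : V) : Prop :=
  ∃ n p k, IsCriticalWalk E w n p ∧ k ≤ n ∧ p k = i

/-- A critical edge: lies on some critical closed walk. -/
def CriticalEdge (E : V → V → Prop) (w : V → V → ℝ) (i j : V) : Prop :=
  ∃ n p k, IsCriticalWalk E w n p ∧ k < n ∧ p k = i ∧ p (k + 1) = j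

/-- The non-critical rate ρ_nc(G): supremum of mean weights of nonempty closed walks
containing no critical node. -/
noncomputable def ncRate (E : V → V → Prop) (w : V → V → ℝ) : ℝ :=
  sSup {x : ℝ | ∃ n p, 0 < n ∧ IsClosedWalk E n p ∧
    (∀ k, k ≤ n → ¬ CriticalNode E w (p k)) ∧ x = walkWeight w n p / n}

/-- Δ(G), the maximum edge weight. -/
noncomputable def maxWeight (E : V → V → Prop) (w : V → V → ℝ) : ℝ :=
  sSup {x : ℝ | ∃ i j, E i j ∧ x = w i j}

/-- δ(G), the minimum edge weight. -/
noncomputable def minWeight (E : V → V → Prop) (w : V → V → ℝ) : ℝ :=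
  sInf {x : ℝ | ∃ i j, E i j ∧ x = w i j}

open Classical in
/-- Δ_nc(G), the maximum weight of an edge joining two non-critical nodes
(ρ(G) if there is no such edge). -/
noncomputable def maxNcWeight (E : V → V → Prop) (w : V → V → ℝ) : ℝ :=
  if (∃ i j, E i j ∧ ¬ CriticalNode E w i ∧ ¬ CriticalNode E w j) then
    sSup {x : ℝ | ∃ i j, E i j ∧ ¬ CriticalNode E w i ∧ ¬ CriticalNode E w j ∧ x = w i j}
  else rate E w

/-- `d` is the greatest common divisor of the set `S` of naturals. -/
def IsGcdOf (d : ℕ) (S : Set ℕ) : Prop :=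
  (∀ s ∈ S, d ∣ s) ∧ ∀ e : ℕ, (∀ s ∈ S, e ∣ s) → e ∣ d

/-- The set of lengths of nonempty closed walks in the graph. -/
def ClosedLengths (E : V → V → Prop) : Set ℕ :=
  {n | 0 < n ∧ ∃ p, IsClosedWalk E n p}

/-- The set of lengths of nonempty closed walks starting at `i`. -/
def ClosedLengthsAt (E : V → V → Prop) (i : V) : Set ℕ :=
  {n | 0 < n ∧ ∃ p, IsWalk E n p ∧ p 0 = i ∧ p n = i}

/-- There is a (possibly empty) closed walk of length `n` starting at `i`. -/
def HasClosedWalkAt (E : V → V → Prop) (i : V) (n : ℕ) : Prop :=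
  ∃ p, IsWalk E n p ∧ p 0 = i ∧ p n = i

/-- cd(G), the cab driver's diameter: the maximum length of simple walks. -/
noncomputable def cabDiameter (E : V → V → Prop) : ℕ :=
  sSup {n | ∃ p, IsSimpleWalk E n p}

/-- cr(G), the circumference: the maximum length of nonempty elementary closed walks. -/
noncomputable def circumference (E : V → V → Prop) : ℕ :=
  sSup {n | ∃ p, IsElemClosedWalk E n p}

/-- `g` is the girth of the graph: the minimum length of nonempty elementary closed walks. -/
def IsGirth (E : V → V → Prop) (g : ℕ) : Prop :=
  IsLeast {n | ∃ p, IsElemClosedWalk E n p} g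

/-- `ep` is the exploration penalty of a graph of cyclicity `c`: the least `m` such that
for every node `i` and every multiple `n` of `c` with `n ≥ m` there is a closed walk
of length `n` starting at `i`. -/
def IsEp (E : V → V → Prop) (c ep : ℕ) : Prop :=
  IsLeast {m | ∀ i : V, ∀ n : ℕ, c ∣ n → m ≤ n → HasClosedWalkAt E i n} ep

/-- `i` and `j` lie in the same strongly connected component of the graph. -/
def SameComp (E : V → V → Prop) (i j : V) : Prop :=
  (∃ n p, IsWalk E n p ∧ p 0 = i ∧ p n = j) ∧ (∃ n p, IsWalk E n p ∧ p 0 = j ∧ p n = i)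

/-- `m` is the exploration penalty of the strongly connected component of `k`
(a component of cyclicity `c`). -/
def IsCompEp (E : V → V → Prop) (k : V) (c m : ℕ) : Prop :=
  IsLeast {m' | ∀ i : V, SameComp E k i → ∀ n : ℕ, c ∣ n → m' ≤ n → HasClosedWalkAt E i n} m

/-- Max-plus matrix product. -/
noncomputable def mpMul {N : ℕ} (A B : Matrix (Fin N) (Fin N) (WithBot ℝ)) :
    Matrix (Fin N) (Fin N) (WithBot ℝ) :=
  fun i j => Finset.univ.sup fun k => A i k + B k j

/-- Max-plus matrix power, `A^{⊗n}`. -/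
noncomputable def mpPow {N : ℕ} (A : Matrix (Fin N) (Fin N) (WithBot ℝ)) :
    ℕ → Matrix (Fin N) (Fin N) (WithBot ℝ)
  | 0 => fun i j => if i = j then (0 : WithBot ℝ) else ⊥
  | n + 1 => mpMul A (mpPow A n)

/-- Max-plus matrix-vector product. -/
noncomputable def mpVec {N : ℕ} (A : Matrix (Fin N) (Fin N) (WithBot ℝ))
    (v : Fin N → WithBot ℝ) : Fin N → WithBot ℝ :=
  fun i => Finset.univ.sup fun j => A i j + v j

/-- The edge relation of the weighted graph `G(A)`. -/
def mEdge {N : ℕ} (A : Matrix (Fin N) (Fin N) (WithBot ℝ)) : Fin N → Fin N → Prop :=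
  fun i j => A i j ≠ ⊥

/-- The edge weights of the weighted graph `G(A)`. -/
noncomputable def mWeight {N : ℕ} (A : Matrix (Fin N) (Fin N) (WithBot ℝ)) :
    Fin N → Fin N → ℝ :=
  fun i j => WithBot.unbotD 0 (A i j)

/-- `A` is irreducible: `G(A)` is strongly connected and has at least one edge. -/
def MPIrreducible {N : ℕ} (A : Matrix (Fin N) (Fin N) (WithBot ℝ)) : Prop :=
  StronglyConnected (mEdge A) ∧ NontrivialGraph (mEdge A)

/-- The linear max-plus system `x(n) = A^{⊗n} ⊗ v`. -/
noncomputable def mpSystem {N : ℕ} (A : Matrix (Fin N) (Fin N) (WithBot ℝ)) (v : Fin N → ℝ)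
    (n : ℕ) : Fin N → WithBot ℝ :=
  mpVec (mpPow A n) fun j => (v j : WithBot ℝ)

/-- The set of indices from which the system `x_{A,v}` is periodic with increment
`p·ρ(A)`; its least element is the transient `n_{A,v}`. -/
noncomputable def SysTransientSet {N : ℕ} (A : Matrix (Fin N) (Fin N) (WithBot ℝ))
    (v : Fin N → ℝ) : Set ℕ :=
  {n₀ | ∃ p : ℕ, 0 < p ∧ ∀ n, n₀ ≤ n → ∀ i,
    mpSystem A v (n + p) i
      = mpSystem A v n i + ((p * rate (mEdge A) (mWeight A) : ℝ) : WithBot ℝ)}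

/-- The set of indices from which the powers of `A` are periodic with increment
`p·ρ(A)`; its least element is the transient `n_A`. -/
noncomputable def MatTransientSet {N : ℕ} (A : Matrix (Fin N) (Fin N) (WithBot ℝ)) : Set ℕ :=
  {n₀ | ∃ p : ℕ, 0 < p ∧ ∀ n, n₀ ≤ n → ∀ i j,
    mpPow A (n + p) i j
      = mpPow A n i j + ((p * rate (mEdge A) (mWeight A) : ℝ) : WithBot ℝ)}

/-- `‖v‖ = max_i v_i − min_i v_i`. -/
noncomputable def vnorm {N : ℕ} (v : Fin N → ℝ) : ℝ :=
  sSup (Set.range v) - sInf (Set.range v)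


/-- Any walk can be shortened to a simple walk with the same endpoints. -/
lemma exists_simple_walk (E : V → V → Prop) :
    ∀ n p, IsWalk E n p → ∃ m q, IsSimpleWalk E m q ∧ q 0 = p 0 ∧ q m = p n ∧ m ≤ n := by
  intro n
  induction n using Nat.strong_induction_on with
  | _ n ih =>
    intro p hp
    by_cases hinj : ∀ k l, k ≤ n → l ≤ n → p k = p l → k = l
    · exact ⟨n, p, ⟨hp, hinj⟩, rfl, rfl, le_rfl⟩
    · push_neg at hinj
      obtain ⟨k, l, hk, hl, heq, hne⟩ := hinj
      -- wlog k < l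
      obtain ⟨k, l, hk, hl, heq, hkl⟩ :
          ∃ k l, k ≤ n ∧ l ≤ n ∧ p k = p l ∧ k < l := by
        rcases lt_or_gt_of_ne hne with h | h
        · exact ⟨k, l, hk, hl, heq, h⟩
        · exact ⟨l, k, hl, hk, heq.symm, h⟩
      set d := l - k with hd
      have hdpos : 0 < d := by omega
      set q : ℕ → V := fun t => if t < k then p t else p (t + d) with hq
      have hqwalk : IsWalk E (n - d) q := by
        intro t ht
        by_cases h1 : t + 1 ≤ k
        · have ht1 : t < k := by omega
          simp only [hq]
          rcases Nat.lt_or_ge (t+1) k with h2 | h2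
          · simp only [if_pos ht1, if_pos h2]
            exact hp t (by omega)
          · have hk1 : t + 1 = k := by omega
            simp only [if_pos ht1, if_neg (by omega : ¬ t + 1 < k)]
            have : p (t + 1 + d) = p (t + 1) := by
              rw [hk1]
              have : k + d = l := by omega
              rw [this, ← heq]
            rw [this]
            exact hp t (by omega)
        · have h2 : ¬ t < k := by omega
          have h3 : ¬ t + 1 < k := by omega
          simp only [hq, if_neg h2, if_neg h3]
          have : t + 1 + d = t + d + 1 := by omega
          rw [this]
          exact hp (t + d) (by omega)
      obtain ⟨m, r, hr, hr0, hrm, hmle⟩ := ih (n - d) (by omega) q hqwalk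
      refine ⟨m, r, hr, ?_, ?_, by omega⟩
      · rw [hr0]
        simp only [hq]
        by_cases h0 : 0 < k
        · simp [h0]
        · have hk0 : k = 0 := by omega
          simp only [if_neg (by omega : ¬ (0:ℕ) < k)]
          rw [zero_add]
          have : d = l := by omega
          rw [this, ← heq, hk0]
      · rw [hrm]
        simp only [hq]
        have : ¬ n - d < k := by omega
        rw [if_neg this]
        congr 1
        omega

lemma cyclicity_pos {V : Type*} (E : V → V → Prop)
    (hnt : NontrivialGraph E) (hsc : StronglyConnected E)
    (c : ℕ) (hc : IsGcdOf c (ClosedLengths E)) : 0 < c := by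
  obtain ⟨a, b, hab⟩ := hnt
  obtain ⟨k, q, hq, hq0, hqk⟩ := hsc b a
  set p : ℕ → V := fun t => if t = 0 then a else q (t - 1) with hp
  have hmem : (k + 1) ∈ ClosedLengths E := by
    refine ⟨Nat.succ_pos k, p, ?_, ?_⟩
    · intro t ht
      rcases Nat.eq_zero_or_pos t with h0 | h0
      · subst h0
        simp only [hp, if_pos rfl, if_neg (by omega : ¬ (0:ℕ)+1 = 0)]
        simpa [hq0] using hab
      · simp only [hp, if_neg (by omega : ¬ t = 0), if_neg (by omega : ¬ t+1 = 0)]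
        have : t + 1 - 1 = (t - 1) + 1 := by omega
        rw [this]
        exact hq (t - 1) (by omega)
    · simp only [hp, if_pos rfl, if_neg (by omega : ¬ k+1 = 0)]
      simp [hqk]
  have hdvd : c ∣ k + 1 := hc.1 _ hmem
  exact Nat.pos_of_dvd_of_pos hdvd (Nat.succ_pos k)

/-- In a nontrivial strongly connected graph, for all nodes `i, j` and
every `n ≥ ep(G) + c(G) + cd(G) − 1` there is a path `π` from `i` to `j` with
`n − ℓ(π) ∈ {0, …, c(G)−1}`. (The condition `n ≥ ep + c + cd − 1` is stated as
`ep + c + cd ≤ n + 1` to avoid natural-number truncation.) -/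
theorem stmt_15 {V : Type*} [Fintype V] (E : V → V → Prop)
    (hnt : NontrivialGraph E) (hsc : StronglyConnected E)
    (c ep : ℕ) (hc : IsGcdOf c (ClosedLengths E)) (hep : IsEp E c ep)
    (i j : V) (n : ℕ) (hn : ep + c + cabDiameter E ≤ n + 1) :
    ∃ m q, IsWalk E m q ∧ q 0 = i ∧ q m = j ∧ m ≤ n ∧ n - m < c := by
  have hcpos : 0 < c := cyclicity_pos E hnt hsc c hc
  -- simple walk from i to j
  obtain ⟨n0, p0, hp0, hp00, hp0n⟩ := hsc i j
  obtain ⟨ℓ, p2, hp2s, hp20, hp2l, _⟩ := exists_simple_walk E n0 p0 hp0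
  have hp20i : p2 0 = i := by rw [hp20, hp00]
  have hp2lj : p2 ℓ = j := by rw [hp2l, hp0n]
  -- ℓ ≤ cabDiameter
  have hbdd : BddAbove {m | ∃ p, IsSimpleWalk E m p} := by
    refine ⟨Fintype.card V, ?_⟩
    rintro m ⟨p, hpw, hpi⟩
    have : Function.Injective (fun k : Fin (m + 1) => p k) := by
      intro a b hab
      exact Fin.ext (hpi a b (by omega) (by omega) hab)
    have := Fintype.card_le_of_injective _ this
    simp only [Fintype.card_fin] at this
    omega
  have hld : ℓ ≤ cabDiameter E := le_csSup hbdd ⟨p2, hp2s⟩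
  -- arithmetic setup
  have hln : ℓ + ep + c ≤ n + 1 := by
    have := hn; omega
  have hlen : ℓ ≤ n := by omega
  have hrlt : (n - ℓ) % c < c := Nat.mod_lt _ hcpos
  have hid : (n - ℓ) % c + c * ((n - ℓ) / c) = n - ℓ := Nat.mod_add_div _ _
  obtain ⟨t, hcdvd, htep, htle, htgt⟩ :
      ∃ t, c ∣ t ∧ ep ≤ t ∧ t + ℓ ≤ n ∧ n - (t + ℓ) < c := by
    refine ⟨n - ℓ - (n - ℓ) % c, ⟨(n - ℓ) / c, by omega⟩, by omega, by omega, by omega⟩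
  obtain ⟨p1, hp1w, hp10, hp1t⟩ := hep.1 i t hcdvd htep
  -- concatenate
  set q : ℕ → V := fun k => if k ≤ t then p1 k else p2 (k - t) with hq
  set m := t + ℓ with hm
  refine ⟨m, q, ?_, ?_, ?_, by omega, by omega⟩
  · intro k hk
    by_cases h1 : k < t
    · simp only [hq, if_pos (by omega : k ≤ t), if_pos (by omega : k + 1 ≤ t)]
      exact hp1w k h1
    · have hqk : q k = p2 (k - t) := by
        by_cases h2 : k = t
        · simp only [hq, h2, if_pos le_rfl, Nat.sub_self]
          rw [hp1t, hp20i]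
        · simp only [hq, if_neg (by omega : ¬ k ≤ t)]
      have hqk1 : q (k + 1) = p2 (k + 1 - t) := by
        simp only [hq, if_neg (by omega : ¬ k + 1 ≤ t)]
      rw [hqk, hqk1]
      have : k + 1 - t = (k - t) + 1 := by omega
      rw [this]
      exact hp2s.1 (k - t) (by omega)
  · simp only [hq, if_pos (Nat.zero_le t)]
    rw [hp10]
  · by_cases h0 : ℓ = 0
    · subst h0
      simp only [hq, hm, Nat.add_zero, if_pos le_rfl]
      rw [hp1t, ← hp20i]
      exact hp2lj
    · simp only [hq, hm, if_neg (by omega : ¬ t + ℓ ≤ t)]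
      rw [Nat.add_sub_cancel_left, hp2lj]

end Transients
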